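/- arXiv:1412.5193 — 2 statements merged into one kernel-verified Lean document; each statement's English description precedes it below -/
import Mathlib

section
/- Let A be a skew PBW extension of a ring R with respect to x₁,…,xₙ, and for all 1 ≤ i,j ≤ n write x_j xᵢ = c_{ij} xᵢ x_j + a_{ij}^{(1)} x₁ + ⋯ + a_{ij}^{(n)} xₙ + d_{ij} with c_{ij}, a_{ij}^{(k)}, d_{ij} ∈ R (these elements are uniquely determined since Mon(A) is an R-basis). Then for all 1 ≤ i < j ≤ n: c_{ji} c_{ij} = 1 (so c_{ji} is a right inverse of c_{ij}, univocally determined), a_{ji}^{(k)} = −c_{ji} a_{ij}^{(k)} for every 1 ≤ k ≤ n, and d_{ji} = −c_{ji} d_{ij}. -/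
/-- The standard monomial `x₁^{α₁} ⋯ xₙ^{αₙ}`, the factors taken in increasing index order. -/
def xmon {A : Type} [Ring A] {n : ℕ} (x : Fin n → A) (α : Fin n → ℕ) : A :=
  ((List.finRange n).map (fun i => x i ^ α i)).prod

/-- `A` is a skew PBW extension of the subring `S ⊆ A` with respect to `x₁,…,xₙ`. -/
structure IsSkewPBWExt {A : Type} [Ring A] {n : ℕ} (S : Subring A) (x : Fin n → A) : Prop where
  linearIndependent : LinearIndependent S (xmon x)
  spans : Submodule.span S (Set.range (xmon x)) = ⊤
  comm_coeff : ∀ (i : Fin n) (r : A), r ∈ S → r ≠ 0 →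
    ∃ c ∈ S, c ≠ 0 ∧ x i * r - c * x i ∈ S
  comm_vars : ∀ i j : Fin n, ∃ c ∈ S, c ≠ 0 ∧
    x j * x i - c * (x i * x j) ∈ Submodule.span S (insert (1 : A) (Set.range x))


lemma prod_map_pair {M ι : Type} [Monoid M] [Preorder ι] [DecidableEq ι] (f : ι → M) :
    ∀ (l : List ι), l.Pairwise (· < ·) → ∀ (i j : ι), i ∈ l → j ∈ l → i < j →
      (∀ m ∈ l, m ≠ i → m ≠ j → f m = 1) → (l.map f).prod = f i * f j := by
  intro l
  induction l with
  | nil => intro _ i j hi; simp at hi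
  | cons hd t ih =>
    intro hs i j hi hj hij h1
    have hst : t.Pairwise (· < ·) := hs.of_cons
    have hlt : ∀ m ∈ t, hd < m := fun m hm => (List.pairwise_cons.mp hs).1 m hm
    rcases List.mem_cons.mp hi with rfl | hit
    · -- hd = i
      have hjt : j ∈ t := by
        rcases List.mem_cons.mp hj with rfl | h
        · exact absurd hij (lt_irrefl _)
        · exact h
      have : (t.map f).prod = f j ^ t.count j := by
        apply List.prod_map_eq_pow_single j f
        intro m hm hmt
        exact h1 m (List.mem_cons_of_mem _ hmt) (fun h => (hlt m hmt).ne' (h ▸ rfl)) hm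
      have hcount : t.count j = 1 := List.count_eq_one_of_mem (hs.nodup.of_cons) hjt
      simp [this, hcount]
    · -- i ∈ t
      have hne : hd ≠ i := fun h => (hlt i hit).ne (h ▸ rfl)
      have hjt : j ∈ t := by
        rcases List.mem_cons.mp hj with rfl | h
        · exact absurd (lt_trans (hlt i hit) hij) (lt_irrefl _)
        · exact h
      have hne2 : hd ≠ j := fun h => (hlt j hjt).ne (h ▸ rfl)
      rw [List.map_cons, List.prod_cons, h1 hd List.mem_cons_self hne hne2, one_mul]
      exact ih hst i j hit hjt hij (fun m hm => h1 m (List.mem_cons_of_mem _ hm))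

lemma xmon_zero {A : Type} [Ring A] {n : ℕ} (x : Fin n → A) : xmon x 0 = 1 := by
  simp [xmon]

lemma xmon_single {A : Type} [Ring A] {n : ℕ} (x : Fin n → A) (k : Fin n) :
    xmon x (Pi.single k 1) = x k := by
  unfold xmon
  have h := List.prod_map_eq_pow_single (l := List.finRange n) k (fun i => x i ^ Pi.single k 1 i)
    (fun m hm _ => by simp [Pi.single_apply, hm])
  rw [h]
  rw [List.count_eq_one_of_mem (List.nodup_finRange n) (List.mem_finRange k)]
  simp

lemma xmon_pair {A : Type} [Ring A] {n : ℕ} (x : Fin n → A) (i j : Fin n) (hij : i < j) :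
    xmon x (Pi.single i 1 + Pi.single j 1) = x i * x j := by
  unfold xmon
  have := prod_map_pair (fun m => x m ^ ((Pi.single i 1 + Pi.single j 1 : Fin n → ℕ) m))
    (List.finRange n) (List.pairwise_lt_finRange n) i j (List.mem_finRange i)
    (List.mem_finRange j) hij (fun m _ hmi hmj => by
      simp [Pi.single_apply, hmi, hmj])
  rw [this]
  simp [Pi.single_apply, hij.ne, hij.ne']

/-- If `x_j xᵢ = c_{ij} xᵢ x_j + a_{ij}^{(1)} x₁ + ⋯ + a_{ij}^{(n)} xₙ + d_{ij}` for all `i, j`,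
then for `i < j`: `c_{ji} c_{ij} = 1`, `a_{ji}^{(k)} = −c_{ji} a_{ij}^{(k)}` and
`d_{ji} = −c_{ji} d_{ij}`. -/
theorem skewPBW_parameters_relations {A : Type} [Ring A] {n : ℕ}
    (S : Subring A) (x : Fin n → A) (hA : IsSkewPBWExt S x)
    (c d : Fin n → Fin n → S) (a : Fin n → Fin n → Fin n → S)
    (hrel : ∀ i j : Fin n,
      x j * x i = (c i j : A) * (x i * x j) + (∑ k, (a i j k : A) * x k) + (d i j : A))
    (i j : Fin n) (hij : i < j) :
    c j i * c i j = 1 ∧ (∀ k, a j i k = - (c j i * a i j k)) ∧ d j i = - (c j i * d i j) := by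
  classical
  have hij' : i ≠ j := ne_of_lt hij
  set e : Fin n → ℕ := Pi.single i 1 + Pi.single j 1 with he
  let emb : Option (Option (Fin n)) → (Fin n → ℕ) := fun t =>
    t.elim 0 fun s => s.elim e fun k => Pi.single k 1
  have hsingle_ne_zero : ∀ k : Fin n, Pi.single k 1 ≠ (0 : Fin n → ℕ) := by
    intro k h
    have := congrFun h k
    simp at this
  have he_i : e i = 1 := by simp [he, Pi.single_apply, hij']
  have he_j : e j = 1 := by simp [he, Pi.single_apply, hij'.symm]
  have hinj : Function.Injective emb := by
    intro s t hst
    rcases s with _ | _ | s <;> rcases t with _ | _ | t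
    · rfl
    · exfalso
      have := congrFun hst i
      simp [emb, he_i] at this
    · exfalso
      have := congrFun hst t
      simp [emb, Pi.single_apply] at this
    · exfalso
      have := congrFun hst i
      simp [emb, he_i] at this
    · rfl
    · exfalso
      rcases eq_or_ne t i with rfl | h
      · have h2 := congrFun hst j
        simp [emb, he_j, Pi.single_apply, hij'.symm] at h2
      · have h1 := congrFun hst i
        simp [emb, he_i, Pi.single_apply, Ne.symm h] at h1
    · exfalso
      have := congrFun hst s
      simp [emb, Pi.single_apply] at this
    · exfalso
      rcases eq_or_ne s i with rfl | h
      · have h2 := congrFun hst j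
        simp [emb, he_j, Pi.single_apply, hij'.symm] at h2
      · have h1 := congrFun hst i
        simp [emb, he_i, Pi.single_apply, Ne.symm h] at h1
    · have := congrFun hst s
      simp only [emb, Option.elim, Pi.single_apply, if_pos rfl] at this
      rcases eq_or_ne s t with h | h
      · rw [h]
      · simp [h] at this
  have hLI := hA.linearIndependent.comp emb hinj
  let g : Option (Option (Fin n)) → S := fun t =>
    t.elim (c j i * d i j + d j i) fun s =>
      s.elim (c j i * c i j - 1) fun k => c j i * a i j k + a j i k
  have hsmul : ∀ (s : S) (y : A), s • y = (s : A) * y := fun _ _ => rfl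
  have hsum0 : ∑ t, g t • (xmon x ∘ emb) t = 0 := by
    rw [Fintype.sum_option, Fintype.sum_option]
    simp only [Function.comp_apply, Option.elim, emb, g, hsmul]
    rw [xmon_zero, he, xmon_pair x i j hij]
    simp only [fun k : Fin n => xmon_single x k]
    push_cast
    have E1 := hrel i j
    have E2 := hrel j i
    have hsum : (∑ k, ((c j i : A) * (a i j k : A) + (a j i k : A)) * x k)
        = (c j i : A) * (∑ k, (a i j k : A) * x k) + ∑ k, (a j i k : A) * x k := by
      rw [Finset.mul_sum, ← Finset.sum_add_distrib]
      exact Finset.sum_congr rfl fun k _ => by rw [add_mul, mul_assoc]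
    calc ((c j i : A) * (d i j : A) + (d j i : A)) * 1
          + (((c j i : A) * (c i j : A) - 1) * (x i * x j)
            + ∑ k, ((c j i : A) * (a i j k : A) + (a j i k : A)) * x k)
        = (c j i : A) * ((c i j : A) * (x i * x j) + (∑ k, (a i j k : A) * x k) + (d i j : A))
            + (∑ k, (a j i k : A) * x k) + (d j i : A) - x i * x j := by
          rw [hsum]; noncomm_ring
      _ = (c j i : A) * (x j * x i) + (∑ k, (a j i k : A) * x k) + (d j i : A)
            - x i * x j := by rw [← E1]
      _ = x i * x j - x i * x j := by rw [← E2]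
      _ = 0 := sub_self _
  have hz := Fintype.linearIndependent_iff.mp hLI g hsum0
  refine ⟨?_, ?_, ?_⟩
  · have := hz (some none)
    simpa [g, sub_eq_zero] using this
  · intro k
    have := hz (some (some k))
    simp only [g, Option.elim] at this
    exact eq_neg_of_add_eq_zero_right this
  · have := hz none
    simp only [g, Option.elim] at this
    exact eq_neg_of_add_eq_zero_right this
end

section
/- (Universal property of skew PBW extensions.) Let A be a skew PBW extension of a ring R with respect to x₁,…,xₙ, with parameters σᵢ, δᵢ, c_{ij}, d_{ij}, a_{ij}^{(k)}. Let B be a ring, φ : R → B a ring homomorphism, and y₁,…,yₙ ∈ B elements such that: (i) yᵢ φ(r) = φ(σᵢ(r)) yᵢ + φ(δᵢ(r)) for every r ∈ R and 1 ≤ i ≤ n; (ii) y_j yᵢ = φ(c_{ij}) yᵢ y_j + φ(a_{ij}^{(1)}) y₁ + ⋯ + φ(a_{ij}^{(n)}) yₙ + φ(d_{ij}) for all 1 ≤ i < j ≤ n. Then there exists a unique ring homomorphism φ̃ : A → B such that φ̃ ∘ ι = φ and φ̃(xᵢ) = yᵢ for every i, where ι : R → A is the inclusion. -/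
lemma xmon_succ {A : Type} [Ring A] {n : ℕ} (x : Fin (n+1) → A) (α : Fin (n+1) → ℕ) :
    xmon x α = x 0 ^ α 0 * xmon (x ∘ Fin.succ) (α ∘ Fin.succ) := by
  simp [xmon, List.finRange_succ, List.map_map]
  rfl

lemma xmon_eq_pow_mul {A : Type} [Ring A] : ∀ {n : ℕ} (x : Fin n → A) (α : Fin n → ℕ)
    (i : Fin n), (∀ k, k < i → α k = 0) →
    xmon x α = x i ^ α i * xmon x (Function.update α i 0)
  | 0, _, _, i, _ => i.elim0
  | n+1, x, α, i, h => by
    induction i using Fin.cases with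
    | zero =>
      rw [xmon_succ x α, xmon_succ x (Function.update α 0 0)]
      have h1 : Function.update α 0 0 0 = 0 := by simp
      have h2 : (Function.update α 0 0) ∘ Fin.succ = α ∘ Fin.succ := by
        funext k
        simp [Function.update_apply, (Fin.succ_ne_zero k)]
      rw [h1, h2, pow_zero, one_mul]
    | succ j =>
      have h0 : α 0 = 0 := h 0 (Fin.succ_pos j)
      rw [xmon_succ x α, xmon_succ x (Function.update α j.succ 0)]
      have h1 : Function.update α j.succ 0 0 = α 0 := by
        simp [Function.update_apply, (Fin.succ_ne_zero j).symm]
      have h2 : (Function.update α j.succ 0) ∘ Fin.succ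
          = Function.update (α ∘ Fin.succ) j 0 := by
        funext k
        simp [Function.comp, Function.update_apply, Fin.succ_inj]
      rw [h1, h2, h0, pow_zero, one_mul, one_mul]
      have := xmon_eq_pow_mul (x ∘ Fin.succ) (α ∘ Fin.succ) j
        (fun k hk => h k.succ (by simpa using hk))
      rw [this]
      rfl

lemma xmon_mul_single {A : Type} [Ring A] {n : ℕ} (x : Fin n → A) (α : Fin n → ℕ) (i : Fin n)
    (h : ∀ k, k < i → α k = 0) :
    x i * xmon x α = xmon x (α + Pi.single i 1) := by
  have hβ : ∀ k, k < i → (α + Pi.single i 1 : Fin n → ℕ) k = 0 := by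
    intro k hk
    have : (Pi.single i 1 : Fin n → ℕ) k = 0 := Pi.single_eq_of_ne (ne_of_lt hk) 1
    simp [h k hk, this]
  rw [xmon_eq_pow_mul x α i h, xmon_eq_pow_mul x (α + Pi.single i 1) i hβ]
  have h1 : (α + Pi.single i 1 : Fin n → ℕ) i = α i + 1 := by simp
  have h2 : Function.update (α + Pi.single i 1) i 0 = Function.update α i 0 := by
    funext k
    rcases eq_or_ne k i with rfl | hki
    · simp
    · simp [Function.update_apply, hki, Pi.single_eq_of_ne hki]
  rw [h1, h2, pow_succ', mul_assoc]

lemma xmon_peel {A : Type} [Ring A] {n : ℕ} (x : Fin n → A) (α : Fin n → ℕ) (i : Fin n)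
    (hi : α i ≠ 0) (h : ∀ k, k < i → α k = 0) :
    xmon x α = x i * xmon x (Function.update α i (α i - 1)) := by
  have h' : ∀ k, k < i → Function.update α i (α i - 1) k = 0 := by
    intro k hk
    simp [Function.update_apply, ne_of_lt hk, h k hk]
  rw [xmon_mul_single x _ i h']
  congr 1
  funext k
  rcases eq_or_ne k i with rfl | hki
  · simp [Nat.sub_add_cancel (Nat.one_le_iff_ne_zero.mpr hi)]
  · simp [Function.update_apply, hki, Pi.single_eq_of_ne hki]

lemma deg_update {n : ℕ} (α : Fin n → ℕ) (i : Fin n) (hi : α i ≠ 0) :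
    (∑ k, Function.update α i (α i - 1) k) + 1 = ∑ k, α k := by
  rw [Finset.sum_update_of_mem (Finset.mem_univ i)]
  rw [← Finset.sum_erase_add Finset.univ α (Finset.mem_univ i)]
  have : Finset.univ \ {i} = Finset.univ.erase i := by
    simp [Finset.erase_eq]
  rw [this]
  omega

lemma deg_add_single {n : ℕ} (α : Fin n → ℕ) (i : Fin n) :
    (∑ k, (α + Pi.single i 1 : Fin n → ℕ) k) = (∑ k, α k) + 1 := by
  simp [Finset.sum_add_distrib]


/-- **The universal property of skew PBW extensions.**  If `B` is a ring, `φ : R → B` a ring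
homomorphism and `y₁,…,yₙ ∈ B` satisfy relations (i) and (ii) with respect to the parameters
`σᵢ, δᵢ, c_{ij}, d_{ij}, a_{ij}^{(k)}` of the skew PBW extension `A` of `R`, then there is a
unique ring homomorphism `φ̃ : A → B` with `φ̃ ∘ ι = φ` and `φ̃(xᵢ) = yᵢ`. -/
theorem skewPBW_universal_property {A : Type} [Ring A] {n : ℕ}
    (S : Subring A) (x : Fin n → A) (hA : IsSkewPBWExt S x)
    -- the parameters of A
    (σ : Fin n → S →+* S) (hσinj : ∀ i, Function.Injective (σ i))
    (δ : Fin n → S → S)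
    (hδadd : ∀ (i : Fin n) (r s : S), δ i (r + s) = δ i r + δ i s)
    (hδmul : ∀ (i : Fin n) (r s : S), δ i (r * s) = σ i r * δ i s + δ i r * s)
    (hσδ : ∀ (i : Fin n) (r : S), x i * (r : A) = (σ i r : A) * x i + (δ i r : A))
    (c d : Fin n → Fin n → S) (a : Fin n → Fin n → Fin n → S)
    (hcda : ∀ i j : Fin n, i < j →
      x j * x i = (c i j : A) * (x i * x j) + (∑ k, (a i j k : A) * x k) + (d i j : A))
    -- the data in B
    {B : Type} [Ring B] (φ : S →+* B) (y : Fin n → B)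
    (hy1 : ∀ (i : Fin n) (r : S), y i * φ r = φ (σ i r) * y i + φ (δ i r))
    (hy2 : ∀ i j : Fin n, i < j →
      y j * y i = φ (c i j) * (y i * y j) + (∑ k, φ (a i j k) * y k) + φ (d i j)) :
    ∃! φt : A →+* B, (∀ r : S, φt r = φ r) ∧ (∀ i, φt (x i) = y i) := by
  classical
  have smul_def : ∀ (r : S) (u : A), r • u = (r : A) * u := fun r u => rfl
  have hbij : Function.Bijective (Finsupp.linearCombination S (xmon x)) := by
    constructor
    · exact hA.linearIndependent
    · rw [← LinearMap.range_eq_top, Finsupp.range_linearCombination, hA.spans]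
  let E : A ≃ₗ[S] ((Fin n → ℕ) →₀ S) := (LinearEquiv.ofBijective _ hbij).symm
  have hTE : ∀ u : A, (Finsupp.linearCombination S (xmon x)) (E u) = u := fun u =>
    (LinearEquiv.ofBijective _ hbij).apply_symm_apply u
  have hE : ∀ (r : S) (α : Fin n → ℕ), E ((r : A) * xmon x α) = Finsupp.single α r := by
    intro r α
    apply hbij.1
    rw [hTE, Finsupp.linearCombination_single, smul_def]
  let Ψ : A →+ B :=
    { toFun := fun u => (E u).sum fun α r => φ r * xmon y α
      map_zero' := by simp
      map_add' := fun u v => by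
        show ((E (u + v)).sum fun α r => φ r * xmon y α)
            = ((E u).sum fun α r => φ r * xmon y α) + ((E v).sum fun α r => φ r * xmon y α)
        rw [map_add]
        exact Finsupp.sum_add_index' (fun α => by simp) (fun α r s => by rw [map_add, add_mul]) }
  have Ψ_eval : ∀ (r : S) (α : Fin n → ℕ), Ψ ((r : A) * xmon x α) = φ r * xmon y α := by
    intro r α
    show ((E _).sum fun α r => φ r * xmon y α) = _
    rw [hE, Finsupp.sum_single_index (by simp)]
  have Ψ_mon : ∀ α : Fin n → ℕ, Ψ (xmon x α) = xmon y α := by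
    intro α
    have := Ψ_eval 1 α
    simpa using this
  have Ψ_smul : ∀ (r : S) (u : A), Ψ ((r : A) * u) = φ r * Ψ u := by
    intro r u
    show ((E _).sum fun α s => φ s * xmon y α) = φ r * ((E u).sum fun α s => φ s * xmon y α)
    rw [← smul_def, map_smul]
    rw [Finsupp.sum_smul_index' (fun α => by simp)]
    rw [Finsupp.mul_sum]
    apply Finsupp.sum_congr
    intro α _
    rw [smul_eq_mul, map_mul, mul_assoc]
  -- degree-filtered spans
  let Sp : ℕ → Submodule S A :=
    fun m => Submodule.span S {u | ∃ α : Fin n → ℕ, (∑ k, α k) ≤ m ∧ u = xmon x α}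
  have Sp_mono : ∀ {m m' : ℕ}, m ≤ m' → Sp m ≤ Sp m' := by
    intro m m' h
    apply Submodule.span_mono
    rintro u ⟨α, hα, rfl⟩
    exact ⟨α, hα.trans h, rfl⟩
  have mem_Sp : ∀ (α : Fin n → ℕ) (m : ℕ), (∑ k, α k) ≤ m → xmon x α ∈ Sp m :=
    fun α m h => Submodule.subset_span ⟨α, h, rfl⟩
  have exists_min : ∀ α : Fin n → ℕ, (∃ k, α k ≠ 0) →
      ∃ j, α j ≠ 0 ∧ (∀ k, k < j → α k = 0) ∧ (∀ k, α k ≠ 0 → j ≤ k) := by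
    intro α hne
    obtain ⟨k0, hk0⟩ := hne
    have hns : (Finset.univ.filter fun k => α k ≠ 0).Nonempty := ⟨k0, by simp [hk0]⟩
    refine ⟨(Finset.univ.filter fun k => α k ≠ 0).min' hns, ?_, ?_, ?_⟩
    · have := Finset.min'_mem _ hns
      simpa using this
    · intro k hk
      by_contra hk0'
      exact absurd (Finset.min'_le _ k (by simp [hk0'])) (not_le.mpr hk)
    · intro k hk
      exact Finset.min'_le _ k (by simp [hk])
  -- the key induction
  have KEY : ∀ (N m : ℕ) (i : Fin n), m * n + i.val ≤ N → ∀ a ∈ Sp m,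
      x i * a ∈ Sp (m + 1) ∧ Ψ (x i * a) = y i * Ψ a := by
    intro N
    induction N using Nat.strong_induction_on with
    | _ N IH =>
    intro m i hN u hu
    induction hu using Submodule.span_induction with
    | mem u hu =>
      obtain ⟨α, hα, rfl⟩ := hu
      by_cases hgood : ∀ k, k < i → α k = 0
      · constructor
        · rw [xmon_mul_single x α i hgood]
          exact mem_Sp _ _ (by rw [deg_add_single]; omega)
        · rw [xmon_mul_single x α i hgood, Ψ_mon, Ψ_mon]
          exact (xmon_mul_single y α i hgood).symm
      · push_neg at hgood
        obtain ⟨k0, hk0lt, hk0⟩ := hgood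
        obtain ⟨j, hj1, hj2, hj3⟩ := exists_min α ⟨k0, hk0⟩
        have hji : j < i := lt_of_le_of_lt (hj3 k0 hk0) hk0lt
        have hpos : 1 ≤ ∑ k, α k :=
          le_trans (Nat.one_le_iff_ne_zero.mpr hj1)
            (Finset.single_le_sum (fun k _ => Nat.zero_le _) (Finset.mem_univ j))
        obtain ⟨M, rfl⟩ : ∃ M, m = M + 1 := ⟨m - 1, by omega⟩
        set α' := Function.update α j (α j - 1) with hα'
        have hxpeel : xmon x α = x j * xmon x α' := xmon_peel x α j hj1 hj2
        have hypeel : xmon y α = y j * xmon y α' := xmon_peel y α j hj1 hj2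
        have hdeg' : (∑ k, α' k) ≤ M := by
          have h := deg_update α j hj1
          rw [hα']
          omega
        have hmem' : xmon x α' ∈ Sp M := mem_Sp α' M hdeg'
        have hn : 0 < n := i.pos
        have hsm : (M + 1) * n = M * n + n := by rw [Nat.succ_mul]
        have hji' : j.val < i.val := hji
        have IH1 := IH (M * n + i.val) (by omega) M i le_rfl (xmon x α') hmem'
        have IH2 := IH ((M + 1) * n + j.val) (by omega) (M + 1) j le_rfl _ IH1.1
        have IH3 : ∀ k : Fin n,
            x k * xmon x α' ∈ Sp (M + 1) ∧ Ψ (x k * xmon x α') = y k * xmon y α' := by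
          intro k
          have hk := k.isLt
          have h := IH (M * n + k.val) (by omega) M k le_rfl (xmon x α') hmem'
          exact ⟨h.1, by rw [h.2, Ψ_mon]⟩
        have expand : x i * xmon x α =
            (c j i : A) * (x j * (x i * xmon x α'))
              + (∑ k, (a j i k : A) * (x k * xmon x α'))
              + (d j i : A) * xmon x α' := by
          rw [hxpeel, ← mul_assoc, hcda j i hji]
          simp only [add_mul, Finset.sum_mul, mul_assoc]
        constructor
        · rw [expand]
          apply add_mem
          apply add_mem
          · rw [← smul_def]
            exact Submodule.smul_mem _ _ IH2.1
          · apply Submodule.sum_mem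
            intro k _
            rw [← smul_def]
            exact Submodule.smul_mem _ _ (Sp_mono (Nat.le_succ _) (IH3 k).1)
          · rw [← smul_def]
            exact Submodule.smul_mem _ _ (Sp_mono (by omega) hmem')
        · have esum : Ψ (∑ k, (a j i k : A) * (x k * xmon x α'))
              = ∑ k, φ (a j i k) * (y k * xmon y α') := by
            rw [map_sum]
            exact Finset.sum_congr rfl fun k _ => by rw [Ψ_smul, (IH3 k).2]
          have e3 : y i * Ψ (xmon x α)
              = (φ (c j i) * (y j * y i) + (∑ k, φ (a j i k) * y k) + φ (d j i))
                  * xmon y α' := by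
            rw [Ψ_mon, hypeel, ← mul_assoc, hy2 j i hji]
          rw [expand, map_add, map_add, esum, Ψ_smul, Ψ_smul, IH2.2, IH1.2, Ψ_mon, e3]
          simp only [add_mul, Finset.sum_mul, mul_assoc]
    | zero =>
      constructor
      · rw [mul_zero]; exact zero_mem _
      · rw [mul_zero, map_zero, mul_zero]
    | add u v hu hv ihu ihv =>
      constructor
      · rw [mul_add]; exact add_mem ihu.1 ihv.1
      · rw [mul_add, map_add, map_add, ihu.2, ihv.2, mul_add]
    | smul r u hu ihu =>
      have hxr : x i * (r • u) = (σ i r : A) * (x i * u) + (δ i r : A) * u := by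
        rw [smul_def, ← mul_assoc, hσδ i r, add_mul, mul_assoc]
      constructor
      · rw [hxr]
        apply add_mem
        · rw [← smul_def]
          exact Submodule.smul_mem _ _ ihu.1
        · rw [← smul_def]
          exact Submodule.smul_mem _ _ (Sp_mono (Nat.le_succ m) hu)
      · rw [hxr, map_add, Ψ_smul, Ψ_smul, ihu.2, smul_def, Ψ_smul,
          ← mul_assoc (φ (σ i r)), ← add_mul, ← hy1 i r, mul_assoc]
  have exists_deg : ∀ u : A, ∃ m, u ∈ Sp m := by
    intro u
    have hu : u ∈ Submodule.span S (Set.range (xmon x)) := by rw [hA.spans]; trivial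
    induction hu using Submodule.span_induction with
    | mem v hv =>
      obtain ⟨α, rfl⟩ := hv
      exact ⟨∑ k, α k, mem_Sp α _ le_rfl⟩
    | zero => exact ⟨0, zero_mem _⟩
    | add u v _ _ ihu ihv =>
      obtain ⟨m1, h1⟩ := ihu
      obtain ⟨m2, h2⟩ := ihv
      exact ⟨max m1 m2, add_mem (Sp_mono (le_max_left _ _) h1) (Sp_mono (le_max_right _ _) h2)⟩
    | smul r u _ ihu =>
      obtain ⟨m, h⟩ := ihu
      exact ⟨m, Submodule.smul_mem _ _ h⟩
  have mul_x : ∀ (i : Fin n) (u : A), Ψ (x i * u) = y i * Ψ u := by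
    intro i u
    obtain ⟨m, hm⟩ := exists_deg u
    exact (KEY (m * n + i.val) m i le_rfl u hm).2
  have mul_mon : ∀ (m : ℕ) (α : Fin n → ℕ), (∑ k, α k) ≤ m → ∀ b : A,
      Ψ (xmon x α * b) = xmon y α * Ψ b := by
    intro m
    induction m with
    | zero =>
      intro α hα b
      have hz : α = 0 := by
        funext k
        have := Finset.sum_eq_zero_iff.mp (Nat.le_zero.mp hα)
        exact this k (Finset.mem_univ k)
      subst hz
      rw [xmon_zero, xmon_zero, one_mul, one_mul]
    | succ m IHm =>
      intro α hα b
      by_cases h0 : ∀ k : Fin n, α k = 0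
      · have hz : α = 0 := funext h0
        subst hz
        rw [xmon_zero, xmon_zero, one_mul, one_mul]
      · push_neg at h0
        obtain ⟨j, hj1, hj2, _⟩ := exists_min α h0
        have hxpeel : xmon x α = x j * xmon x (Function.update α j (α j - 1)) :=
          xmon_peel x α j hj1 hj2
        have hypeel : xmon y α = y j * xmon y (Function.update α j (α j - 1)) :=
          xmon_peel y α j hj1 hj2
        have hdeg : (∑ k, Function.update α j (α j - 1) k) ≤ m := by
          have := deg_update α j hj1
          omega
        rw [hxpeel, hypeel, mul_assoc, mul_x, IHm _ hdeg b, mul_assoc]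
  have mul_full : ∀ u b : A, Ψ (u * b) = Ψ u * Ψ b := by
    intro u b
    have hu : u ∈ Submodule.span S (Set.range (xmon x)) := by rw [hA.spans]; trivial
    induction hu using Submodule.span_induction with
    | mem v hv =>
      obtain ⟨α, rfl⟩ := hv
      rw [mul_mon (∑ k, α k) α le_rfl b, Ψ_mon]
    | zero => rw [zero_mul, map_zero, zero_mul]
    | add u v _ _ ihu ihv => rw [add_mul, map_add, map_add, ihu, ihv, add_mul]
    | smul r v _ ihv => rw [smul_def, mul_assoc, Ψ_smul, Ψ_smul, ihv, mul_assoc]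
  have Ψ_one : Ψ 1 = 1 := by
    have h := Ψ_mon 0
    rw [xmon_zero, xmon_zero] at h
    exact h
  let φt : A →+* B := { Ψ with map_one' := Ψ_one, map_mul' := mul_full }
  have hφtΨ : ∀ u : A, φt u = Ψ u := fun u => rfl
  have hφt1 : ∀ r : S, φt (r : A) = φ r := by
    intro r
    rw [hφtΨ]
    have h1 : (r : A) = (r : A) * xmon x 0 := by rw [xmon_zero, mul_one]
    rw [h1, Ψ_eval, xmon_zero, mul_one]
  have hφt2 : ∀ i, φt (x i) = y i := by
    intro i
    rw [hφtΨ]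
    have h1 : x i = x i * 1 := (mul_one _).symm
    rw [h1, mul_x, Ψ_one, mul_one]
  refine ⟨φt, ⟨hφt1, hφt2⟩, ?_⟩
  rintro g ⟨hg1, hg2⟩
  have hgmon : ∀ α : Fin n → ℕ, g (xmon x α) = xmon y α := by
    intro α
    show g (((List.finRange n).map fun i => x i ^ α i).prod)
        = ((List.finRange n).map fun i => y i ^ α i).prod
    rw [map_list_prod, List.map_map]
    have : (⇑g ∘ fun i => x i ^ α i) = fun i => y i ^ α i := by
      funext i
      rw [Function.comp_apply, map_pow, hg2 i]
    rw [this]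
  apply RingHom.ext
  intro u
  have hu : u ∈ Submodule.span S (Set.range (xmon x)) := by rw [hA.spans]; trivial
  induction hu using Submodule.span_induction with
  | mem v hv =>
    obtain ⟨α, rfl⟩ := hv
    rw [hgmon, hφtΨ, Ψ_mon]
  | zero => rw [map_zero, map_zero]
  | add u v _ _ ihu ihv => rw [map_add, map_add, ihu, ihv]
  | smul r v _ ihv => rw [smul_def, map_mul, map_mul, ihv, hg1 r, hφt1 r]
end
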